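/- If the algebra A is weakly simple, then >_WPO has the subterm property: f(s1,...,si,...,sn) >_WPO s_i for every i. -/

import Mathlib

/-- First-order terms over a signature `F` with arity function `ar`
and variables from `V`. -/
inductive Trm (F : Type) (ar : F → ℕ) (V : Type) : Type where
  | var : V → Trm F ar V
  | fn  : (f : F) → (Fin (ar f) → Trm F ar V) → Trm F ar V

variable {F V : Type} {ar : F → ℕ}

/-- Application of a substitution to a term. -/
def Trm.subst (θ : V → Trm F ar V) : Trm F ar V → Trm F ar V
  | .var x => θ x
  | .fn f ss => .fn f fun i => (ss i).subst θ

/-- Strict part of a quasi-precedence. -/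
def precGT (prec : F → F → Prop) (f g : F) : Prop := prec f g ∧ ¬ prec g f
/-- Equivalence part of a quasi-precedence. -/
def precEQ (prec : F → F → Prop) (f g : F) : Prop := prec f g ∧ prec g f

/-- Strict lexicographic extension of (GE, GT) to lists. -/
inductive LexGT {α : Type} (GE GT : α → α → Prop) : List α → List α → Prop
  | cons_nil {a l} : LexGT GE GT (a :: l) []
  | head {a b l m} : GT a b → LexGT GE GT (a :: l) (b :: m)
  | tail {a b l m} : GE a b → LexGT GE GT l m → LexGT GE GT (a :: l) (b :: m)

/-- Weak lexicographic extension of (GE, GT) to lists. -/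
inductive LexGE {α : Type} (GE GT : α → α → Prop) : List α → List α → Prop
  | nil {l} : LexGE GE GT l []
  | head {a b l m} : GT a b → LexGE GE GT (a :: l) (b :: m)
  | tail {a b l m} : GE a b → LexGE GE GT l m → LexGE GE GT (a :: l) (b :: m)

/-- The case analysis of the WPO definition, parameterized by the
lexicographic extension used (strict or weak). -/
def WPOCases (AGS AGT : Trm F ar V → Trm F ar V → Prop) (prec : F → F → Prop)
    (σ : ∀ f : F, List (Fin (ar f)))
    (GE GT : Trm F ar V → Trm F ar V → Prop)
    (lex : List (Trm F ar V) → List (Trm F ar V) → Prop)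
    (f : F) (ss : Fin (ar f) → Trm F ar V) (t : Trm F ar V) : Prop :=
  AGT (.fn f ss) t ∨
    (AGS (.fn f ss) t ∧
      ((∃ i ∈ σ f, GE (ss i) t) ∨
       (∃ g ts, t = Trm.fn g ts ∧ (∀ j ∈ σ g, GT (.fn f ss) (ts j)) ∧
         (precGT prec f g ∨ (precEQ prec f g ∧ lex ((σ f).map ss) ((σ g).map ts))))))

/-- The pair of relations (GE, GT) satisfies the defining equations of
the weighted path order, over term-level algebra orders AGS (weak) and
AGT (strict), quasi-precedence `prec`, and (partial) status `σ`. -/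
structure IsWPO (AGS AGT : Trm F ar V → Trm F ar V → Prop) (prec : F → F → Prop)
    (σ : ∀ f : F, List (Fin (ar f)))
    (GE GT : Trm F ar V → Trm F ar V → Prop) : Prop where
  ge_var : ∀ (x : V) (t : Trm F ar V), GE (.var x) t ↔ t = .var x
  gt_var : ∀ (x : V) (t : Trm F ar V), ¬ GT (.var x) t
  gt_fn : ∀ (f : F) (ss : Fin (ar f) → Trm F ar V) (t : Trm F ar V),
    GT (.fn f ss) t ↔ WPOCases AGS AGT prec σ GE GT (LexGT GE GT) f ss t
  ge_fn : ∀ (f : F) (ss : Fin (ar f) → Trm F ar V) (t : Trm F ar V),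
    GE (.fn f ss) t ↔ WPOCases AGS AGT prec σ GE GT (LexGE GE GT) f ss t

/-- A status is total iff each `σ f` is a permutation of all argument
positions of `f`. -/
def TotalStatus (σ : ∀ f : F, List (Fin (ar f))) : Prop :=
  ∀ f : F, (σ f).Perm (List.finRange (ar f))

lemma lexGE_refl {α : Type} {GE GT : α → α → Prop} :
    ∀ l : List α, (∀ a ∈ l, GE a a) → LexGE GE GT l l := by
  intro l
  induction l with
  | nil => intro _; exact LexGE.nil
  | cons a l ih =>
    intro h
    exact LexGE.tail (h a List.mem_cons_self) (ih fun b hb => h b (List.mem_cons_of_mem a hb))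

/-- If the algebra is weakly simple (in every argument position) and
the status is total, then `>_WPO` has the subterm property:
`f(s1,...,si,...,sn) >_WPO s_i` for every `i`. -/
theorem wpo_subterm
    {F V : Type} {ar : F → ℕ}
    (AGS AGT : Trm F ar V → Trm F ar V → Prop) (prec : F → F → Prop)
    (σ : ∀ f : F, List (Fin (ar f)))
    (GE GT : Trm F ar V → Trm F ar V → Prop)
    (hW : IsWPO AGS AGT prec σ GE GT)
    (htot : TotalStatus σ)
    (hprec_refl : Reflexive prec)
    (hAGS_refl : Reflexive AGS)
    (hsimple : ∀ (f : F) (ss : Fin (ar f) → Trm F ar V) (i : Fin (ar f)),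
        AGS (.fn f ss) (ss i)) :
    ∀ (f : F) (ss : Fin (ar f) → Trm F ar V) (i : Fin (ar f)),
      GT (.fn f ss) (ss i) := by
  have ge_refl : ∀ t : Trm F ar V, GE t t := by
    intro t
    induction t with
    | var x => exact (hW.ge_var x _).mpr rfl
    | fn f ss ih =>
      have hGT : ∀ j ∈ σ f, GT (.fn f ss) (ss j) := fun j hj =>
        (hW.gt_fn f ss (ss j)).mpr (Or.inr ⟨hsimple f ss j, Or.inl ⟨j, hj, ih j⟩⟩)
      refine (hW.ge_fn f ss _).mpr (Or.inr ⟨hAGS_refl _, Or.inr ⟨f, ss, rfl, hGT,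
        Or.inr ⟨⟨hprec_refl f, hprec_refl f⟩, ?_⟩⟩⟩)
      apply lexGE_refl
      intro a ha
      obtain ⟨j, _, rfl⟩ := List.mem_map.mp ha
      exact ih j
  intro f ss i
  have hi : i ∈ σ f := (htot f).mem_iff.mpr (List.mem_finRange i)
  exact (hW.gt_fn f ss (ss i)).mpr (Or.inr ⟨hsimple f ss i, Or.inl ⟨i, hi, ge_refl (ss i)⟩⟩)
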